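/- Let H be an r×n binary parity-check matrix in which every column has Hamming weight at least v, and suppose the maximum column intersection of H is s (i.e., any two distinct columns share a 1 in at most s common rows). Then one round of majority-logic decoding based on H (flip bit i iff strictly more than half of the parity checks involving i are unsatisfied, all flips computed in parallel) corrects every error pattern of weight at most ⌊v/(2s)⌋. -/

import Mathlib

open Finset

open Classical in
/-- Counting lemma: checks involving `i` that also involve some column of `T`
(with `i ∉ T`) number at most `T.card * s`. -/
lemma majority_key (r n s : ℕ) (H : Matrix (Fin r) (Fin n) (ZMod 2))
    (hint : ∀ i i' : Fin n, i ≠ i' →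
      (Finset.univ.filter (fun j : Fin r => H j i = 1 ∧ H j i' = 1)).card ≤ s)
    (i : Fin n) (T : Finset (Fin n)) (hiT : i ∉ T) :
    (Finset.univ.filter (fun j : Fin r => H j i = 1 ∧ ∃ i' ∈ T, H j i' = 1)).card
      ≤ T.card * s := by
  classical
  have hsub : Finset.univ.filter (fun j : Fin r => H j i = 1 ∧ ∃ i' ∈ T, H j i' = 1)
      ⊆ T.biUnion (fun i' => Finset.univ.filter (fun j => H j i = 1 ∧ H j i' = 1)) := by
    intro j hj
    simp only [mem_filter, mem_univ, true_and] at hj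
    obtain ⟨h1, i', hi', h2⟩ := hj
    exact mem_biUnion.2 ⟨i', hi', by simp [h1, h2]⟩
  calc (Finset.univ.filter (fun j : Fin r => H j i = 1 ∧ ∃ i' ∈ T, H j i' = 1)).card
      ≤ (T.biUnion (fun i' => Finset.univ.filter (fun j => H j i = 1 ∧ H j i' = 1))).card :=
        card_le_card hsub
    _ ≤ ∑ i' ∈ T, (Finset.univ.filter (fun j => H j i = 1 ∧ H j i' = 1)).card :=
        card_biUnion_le
    _ ≤ ∑ _i' ∈ T, s := by
        refine sum_le_sum fun i' hi' => hint i i' ?_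
        rintro rfl; exact hiT hi'
    _ = T.card * s := by rw [sum_const, smul_eq_mul]

/-- Majority-logic decoding based on a parity-check matrix whose
columns all have weight at least `v` and whose maximum column intersection is `s`
corrects every error pattern of weight at most `⌊v/(2s)⌋`. -/
theorem majority_logic_corrects
    (r n v s : ℕ) (hs : 0 < s)
    (H : Matrix (Fin r) (Fin n) (ZMod 2))
    (hcol : ∀ i : Fin n, v ≤ (Finset.univ.filter (fun j : Fin r => H j i = 1)).card)
    (hint : ∀ i i' : Fin n, i ≠ i' →
      (Finset.univ.filter (fun j : Fin r => H j i = 1 ∧ H j i' = 1)).card ≤ s)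
    (c e : Fin n → ZMod 2)
    (hc : Matrix.mulVec H c = 0)
    (hwt : (Finset.univ.filter (fun i : Fin n => e i ≠ 0)).card ≤ v / (2 * s)) :
    ∀ i : Fin n,
      (if (Finset.univ.filter (fun j : Fin r => H j i = 1)).card <
          2 * (Finset.univ.filter (fun j : Fin r =>
                H j i = 1 ∧ Matrix.mulVec H (c + e) j = 1)).card
       then (c + e) i + 1 else (c + e) i) = c i := by
  classical
  intro i
  have h01 : ∀ x : ZMod 2, x = 0 ∨ x = 1 := by decide
  set E := Finset.univ.filter (fun i : Fin n => e i ≠ 0) with hE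
  have h2s : 0 < 2 * s := by omega
  have htv : E.card * (2 * s) ≤ v := (Nat.le_div_iff_mul_le h2s).1 hwt
  -- the syndrome
  have hsyn : ∀ j, Matrix.mulVec H (c + e) j = ∑ i' ∈ E, H j i' := by
    intro j
    have h1 : Matrix.mulVec H (c + e) j = Matrix.mulVec H e j := by
      rw [Matrix.mulVec_add, hc]; simp
    rw [h1]
    show ∑ i', H j i' * e i' = ∑ i' ∈ E, H j i'
    rw [← Finset.sum_subset (Finset.subset_univ E)
      (fun x _ hx => by
        have : e x = 0 := by
          by_contra hne
          exact hx (by simp [hE, hne])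
        simp [this])]
    refine Finset.sum_congr rfl fun x hx => ?_
    have hex : e x ≠ 0 := by simpa [hE] using hx
    rcases h01 (e x) with h | h
    · exact absurd h hex
    · rw [h, mul_one]
  by_cases hi : e i = 0
  · -- position i is correct; show the decoder does not flip
    have hiE : i ∉ E := by simp [hE, hi]
    have hsub : Finset.univ.filter (fun j : Fin r =>
          H j i = 1 ∧ Matrix.mulVec H (c + e) j = 1)
        ⊆ Finset.univ.filter (fun j : Fin r => H j i = 1 ∧ ∃ i' ∈ E, H j i' = 1) := by
      intro j hj
      simp only [mem_filter, mem_univ, true_and] at hj ⊢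
      refine ⟨hj.1, ?_⟩
      by_contra hcon
      push_neg at hcon
      have hz : ∑ i' ∈ E, H j i' = 0 := by
        refine Finset.sum_eq_zero fun i' hi' => ?_
        rcases h01 (H j i') with h | h
        · exact h
        · exact absurd h (hcon i' hi')
      have := hj.2
      rw [hsyn j, hz] at this
      exact one_ne_zero this.symm
    have hU : (Finset.univ.filter (fun j : Fin r =>
          H j i = 1 ∧ Matrix.mulVec H (c + e) j = 1)).card ≤ E.card * s :=
      le_trans (card_le_card hsub) (majority_key r n s H hint i E hiE)
    rw [if_neg]
    · show c i + e i = c i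
      rw [hi, add_zero]
    · push_neg
      calc 2 * (Finset.univ.filter (fun j : Fin r =>
            H j i = 1 ∧ Matrix.mulVec H (c + e) j = 1)).card
          ≤ 2 * (E.card * s) := by omega
        _ = E.card * (2 * s) := by ring
        _ ≤ v := htv
        _ ≤ _ := hcol i
  · -- position i is in error; show the decoder flips
    have hiE : i ∈ E := by simp [hE, hi]
    have hei : e i = 1 := (h01 (e i)).resolve_left hi
    -- split the checks on i into unsatisfied and satisfied
    have hsplit :
        ((Finset.univ.filter (fun j : Fin r => H j i = 1)).filter
            (fun j => Matrix.mulVec H (c + e) j = 1)).card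
        + ((Finset.univ.filter (fun j : Fin r => H j i = 1)).filter
            (fun j => ¬ Matrix.mulVec H (c + e) j = 1)).card
        = (Finset.univ.filter (fun j : Fin r => H j i = 1)).card :=
      Finset.card_filter_add_card_filter_not _
    rw [Finset.filter_filter, Finset.filter_filter] at hsplit
    -- satisfied checks must involve another error position
    have hBsub : Finset.univ.filter (fun j : Fin r =>
          H j i = 1 ∧ ¬ Matrix.mulVec H (c + e) j = 1)
        ⊆ Finset.univ.filter (fun j : Fin r =>
            H j i = 1 ∧ ∃ i' ∈ E.erase i, H j i' = 1) := by
      intro j hj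
      simp only [mem_filter, mem_univ, true_and] at hj ⊢
      refine ⟨hj.1, ?_⟩
      have hsum : (H j i) + ∑ i' ∈ E.erase i, H j i' = ∑ i' ∈ E, H j i' :=
        Finset.add_sum_erase E (fun i' => H j i') hiE
      have hsyn0 : Matrix.mulVec H (c + e) j = 0 :=
        (h01 _).resolve_right hj.2
    -- from 0 = 1 + rest conclude rest = 1
      have hrest : ∑ i' ∈ E.erase i, H j i' = 1 := by
        have h0 : (1 : ZMod 2) + ∑ i' ∈ E.erase i, H j i' = 0 := by
          rw [← hj.1] at *
          rw [hsum, ← hsyn j, hsyn0]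
        rcases h01 (∑ i' ∈ E.erase i, H j i') with h | h
        · rw [h, add_zero] at h0; exact absurd h0 one_ne_zero
        · exact h
      by_contra hcon
      push_neg at hcon
      have hz : ∑ i' ∈ E.erase i, H j i' = 0 :=
        Finset.sum_eq_zero fun i' hi' => (h01 _).resolve_right (hcon i' hi')
      rw [hz] at hrest
      exact one_ne_zero hrest.symm
    have hB : (Finset.univ.filter (fun j : Fin r =>
          H j i = 1 ∧ ¬ Matrix.mulVec H (c + e) j = 1)).card ≤ (E.erase i).card * s :=
      le_trans (card_le_card hBsub)
        (majority_key r n s H hint i (E.erase i) (Finset.notMem_erase i E))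
    have hEpos : 1 ≤ E.card := Finset.card_pos.2 ⟨i, hiE⟩
    obtain ⟨m, hm⟩ : ∃ m, E.card = m + 1 := ⟨E.card - 1, by omega⟩
    have herase : (E.erase i).card = m := by
      rw [Finset.card_erase_of_mem hiE, hm]; omega
    rw [herase] at hB
    have hv : v ≤ (Finset.univ.filter (fun j : Fin r => H j i = 1)).card := hcol i
    rw [hm] at htv
    have hexp : (m + 1) * (2 * s) = 2 * (m * s) + 2 * s := by ring
    rw [if_pos]
    · show c i + e i + 1 = c i
      rw [hei]
      have : (1 : ZMod 2) + 1 = 0 := by decide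
      rw [add_assoc, this, add_zero]
    · omega
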